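/- Let x₁, x₂ be real numbers and let u, a₁, a₂ ∈ ℂ, and set P = 1 + u and Q = a₁ + a₂·u; assume P ≠ 0 and Q ≠ 0. Define B₁(x) = x − 1/2 and B₂(x) = x² − x + 1/6. Then there exist δ > 0 and a function F : ℂ → ℂ which is analytic at 0, satisfies F(t) = t² · exp(((1−x₁)·P + (1−x₂)·Q)·t) / ((1 − exp(P·t))·(1 − exp(Q·t))) for all t with 0 < |t| < δ, satisfies F(0) = 1/(P·Q), and whose second Taylor coefficient at 0 satisfies (1/2)·F''(0) = (P/Q)·B₂(x₁)/2 + B₁(x₁)·B₁(x₂) + (Q/P)·B₂(x₂)/2. -/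

import Mathlib

open Real Complex Topology Filter Finset
private lemma analyticAt_deriv' {f : ℂ → ℂ} {x : ℂ} (hf : AnalyticAt ℂ f x) :
    AnalyticAt ℂ (deriv f) x := by
  obtain ⟨s, hs, hsa⟩ := hf.eventually_analyticAt.exists_mem
  obtain ⟨t, hts, hto, hxt⟩ := mem_nhds_iff.1 hs
  exact (AnalyticOnNhd.deriv (fun y hy => hsa y (hts hy))) x hxt

private lemma itdWithin_open {f : ℂ → ℂ} {s : Set ℂ} (hs : IsOpen s) {x : ℂ} (hx : x ∈ s)
    (n : ℕ) : iteratedDerivWithin n f s x = iteratedDeriv n f x := by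
  rw [iteratedDerivWithin_eq_iteratedFDerivWithin, iteratedDeriv_eq_iteratedFDeriv,
    iteratedFDerivWithin_of_isOpen n hs hx]

private lemma itd_add (n : ℕ) {f g : ℂ → ℂ} {x : ℂ} (hf : AnalyticAt ℂ f x)
    (hg : AnalyticAt ℂ g x) :
    iteratedDeriv n (fun y => f y + g y) x = iteratedDeriv n f x + iteratedDeriv n g x := by
  obtain ⟨s, hs, hsa⟩ := (hf.eventually_analyticAt.and hg.eventually_analyticAt).exists_mem
  obtain ⟨t, hts, hto, hxt⟩ := mem_nhds_iff.1 hs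
  have hft : ContDiffOn ℂ n f t := fun y hy => ((hsa y (hts hy)).1.contDiffAt).contDiffWithinAt
  have hgt : ContDiffOn ℂ n g t := fun y hy => ((hsa y (hts hy)).2.contDiffAt).contDiffWithinAt
  have := iteratedDerivWithin_add hxt hto.uniqueDiffOn (hft x hxt) (hgt x hxt)
  rw [itdWithin_open hto hxt, itdWithin_open hto hxt, itdWithin_open hto hxt] at this
  exact this

private lemma binom_shuffle (n : ℕ) (A B : ℕ → ℂ) :
    ((∑ k ∈ Finset.range (n + 1), (n.choose k : ℂ) * A (k + 1) * B (n - k)) +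
      ∑ k ∈ Finset.range (n + 1), (n.choose k : ℂ) * A k * B (n - k + 1)) =
    ∑ k ∈ Finset.range (n + 1 + 1), ((n + 1).choose k : ℂ) * A k * B (n + 1 - k) := by
  rw [Finset.sum_range_succ' (fun k => ((n + 1).choose k : ℂ) * A k * B (n + 1 - k)) (n + 1)]
  have h1 : ∀ i ∈ Finset.range (n + 1),
      ((n + 1).choose (i + 1) : ℂ) * A (i + 1) * B (n + 1 - (i + 1)) =
        (n.choose i : ℂ) * A (i + 1) * B (n - i) +
          (n.choose (i + 1) : ℂ) * A (i + 1) * B (n - i) := by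
    intro i _
    have h : n + 1 - (i + 1) = n - i := by omega
    rw [h, Nat.choose_succ_succ]
    push_cast
    ring
  rw [Finset.sum_congr rfl h1, Finset.sum_add_distrib]
  rw [Finset.sum_range_succ (fun i => (n.choose (i + 1) : ℂ) * A (i + 1) * B (n - i)) n]
  rw [Finset.sum_range_succ' (fun k => (n.choose k : ℂ) * A k * B (n - k + 1)) n]
  have h2 : ∀ i ∈ Finset.range n,
      (n.choose (i + 1) : ℂ) * A (i + 1) * B (n - (i + 1) + 1) =
        (n.choose (i + 1) : ℂ) * A (i + 1) * B (n - i) := by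
    intro i hi
    have h : n - (i + 1) + 1 = n - i := by
      have := Finset.mem_range.1 hi; omega
    rw [h]
  rw [Finset.sum_congr rfl h2]
  simp [Nat.choose_succ_self]
  ring

private lemma itd_leibniz : ∀ (n : ℕ) (f g : ℂ → ℂ) (x : ℂ), AnalyticAt ℂ f x →
    AnalyticAt ℂ g x →
    iteratedDeriv n (fun y => f y * g y) x =
      ∑ k ∈ Finset.range (n + 1),
        (n.choose k : ℂ) * iteratedDeriv k f x * iteratedDeriv (n - k) g x := by
  intro n
  induction n with
  | zero => intro f g x hf hg; simp
  | succ n ih =>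
    intro f g x hf hg
    have hder : deriv (fun y => f y * g y) =ᶠ[𝓝 x]
        fun y => deriv f y * g y + f y * deriv g y := by
      filter_upwards [hf.eventually_analyticAt, hg.eventually_analyticAt] with y hfy hgy
      exact deriv_mul hfy.differentiableAt hgy.differentiableAt
    rw [iteratedDeriv_succ', hder.iteratedDeriv_eq n]
    have hf' := analyticAt_deriv' hf
    have hg' := analyticAt_deriv' hg
    rw [itd_add n (f := fun y => deriv f y * g y) (g := fun y => f y * deriv g y) (hf'.mul hg) (hf.mul hg')]
    rw [ih (deriv f) g x hf' hg, ih f (deriv g) x hf hg']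
    simp only [← iteratedDeriv_succ']
    exact binom_shuffle n (fun k => iteratedDeriv k f x) (fun k => iteratedDeriv k g x)

private lemma itd_const_fun : ∀ (n : ℕ) (c : ℂ),
    iteratedDeriv (n + 1) (fun _ : ℂ => c) = fun _ => 0 := by
  intro n
  induction n with
  | zero => intro c; rw [iteratedDeriv_one, deriv_const']
  | succ n ih => intro c; rw [iteratedDeriv_succ', deriv_const']; exact ih 0

private lemma itd_one_sub_exp (w : ℂ) (n : ℕ) (hn : n ≠ 0) :
    iteratedDeriv n (fun t : ℂ => 1 - Complex.exp (w * t)) 0 = -w ^ n := by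
  have h : (fun t : ℂ => 1 - Complex.exp (w * t)) =
      fun t => (fun _ : ℂ => (1 : ℂ)) t + (fun t : ℂ => -Complex.exp (w * t)) t := by
    funext t; ring
  have hexp : AnalyticAt ℂ (fun t : ℂ => Complex.exp (w * t)) 0 :=
    (analyticAt_const.mul analyticAt_id).cexp
  rw [h, itd_add n (f := fun _ : ℂ => (1 : ℂ)) (g := fun t : ℂ => -Complex.exp (w * t))
      analyticAt_const hexp.neg, iteratedDeriv_fun_neg, iteratedDeriv_cexp_const_mul]
  obtain ⟨m, rfl⟩ := Nat.exists_eq_succ_of_ne_zero hn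
  rw [itd_const_fun m 1]
  simp

set_option maxHeartbeats 1000000 in
/-- The constant term of the Laurent expansion at `t = 0` of
`g(t,tu) = e^{((1-x₁)P+(1-x₂)Q)t}/((1-e^{Pt})(1-e^{Qt}))` (with `P = 1+u`,
`Q = a₁+a₂u`) equals `(P/Q)B₂(x₁)/2 + B₁(x₁)B₁(x₂) + (Q/P)B₂(x₂)/2`,
expressed via the analytic extension of `t² · g(t,tu)` across `t = 0`. -/
theorem laurent_constant_term_bernoulli
    (x₁ x₂ : ℝ) (u a₁ a₂ : ℂ) (P Q : ℂ) (hP : P = 1 + u) (hQ : Q = a₁ + a₂ * u)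
    (hP0 : P ≠ 0) (hQ0 : Q ≠ 0) :
    ∃ δ > (0:ℝ), ∃ F : ℂ → ℂ, AnalyticAt ℂ F 0 ∧
      (∀ t : ℂ, 0 < ‖t‖ → ‖t‖ < δ →
        F t = t ^ 2 * Complex.exp (((1 - (x₁ : ℂ)) * P + (1 - (x₂ : ℂ)) * Q) * t) /
          ((1 - Complex.exp (P * t)) * (1 - Complex.exp (Q * t)))) ∧
      F 0 = 1 / (P * Q) ∧
      (1 / 2) * iteratedDeriv 2 F 0 =
        (P / Q) * ((x₁ : ℂ) ^ 2 - (x₁ : ℂ) + 1 / 6) / 2 +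
          ((x₁ : ℂ) - 1 / 2) * ((x₂ : ℂ) - 1 / 2) +
          (Q / P) * ((x₂ : ℂ) ^ 2 - (x₂ : ℂ) + 1 / 6) / 2 := by
  set c : ℂ := (1 - (x₁ : ℂ)) * P + (1 - (x₂ : ℂ)) * Q with hc
  -- non-vanishing of the denominators near 0
  have key_ne : ∀ w : ℂ, w ≠ 0 → ∀ t : ℂ, t ≠ 0 → ‖t‖ < π / ‖w‖ →
      1 - Complex.exp (w * t) ≠ 0 := by
    intro w hw t ht hlt hcontra
    have hwt : w * t ≠ 0 := mul_ne_zero hw ht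
    have h1 : Complex.exp (w * t) = 1 := (sub_eq_zero.1 hcontra).symm
    obtain ⟨k, hk⟩ := Complex.exp_eq_one_iff.1 h1
    have hk0 : k ≠ 0 := by
      rintro rfl
      simp only [Int.cast_zero, zero_mul] at hk
      exact hwt hk
    have hnorm : ‖w * t‖ = |(k : ℝ)| * (2 * π) := by
      rw [hk]
      simp [norm_mul, abs_of_pos Real.pi_pos]
    have h2 : 2 * π ≤ ‖w * t‖ := by
      rw [hnorm]
      have h1k : (1 : ℝ) ≤ |(k : ℝ)| := by exact_mod_cast Int.one_le_abs hk0
      nlinarith [Real.pi_pos]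
    have h3 : ‖w * t‖ < π := by
      rw [norm_mul]
      calc ‖w‖ * ‖t‖ < ‖w‖ * (π / ‖w‖) := by
            exact mul_lt_mul_of_pos_left hlt (norm_pos_iff.2 hw)
        _ = π := by rw [mul_comm, div_mul_cancel₀ _ (norm_ne_zero_iff.2 hw)]
    nlinarith [Real.pi_pos]
  have hδpos : 0 < min (π / ‖P‖) (π / ‖Q‖) :=
    lt_min (div_pos Real.pi_pos (norm_pos_iff.2 hP0)) (div_pos Real.pi_pos (norm_pos_iff.2 hQ0))
  refine ⟨min (π / ‖P‖) (π / ‖Q‖), hδpos, ?_⟩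
  -- the limit of t / (1 - exp (w t))
  have hqlim : ∀ w : ℂ, w ≠ 0 →
      Tendsto (fun t : ℂ => t / (1 - Complex.exp (w * t))) (𝓝[≠] 0) (𝓝 (-w)⁻¹) := by
    intro w hw
    have h0 : HasDerivAt (fun t : ℂ => w * t) w 0 := by
      simpa using (hasDerivAt_id (0 : ℂ)).const_mul w
    have h1 : HasDerivAt (fun t : ℂ => 1 - Complex.exp (w * t)) (-w) 0 := by
      simpa using (h0.cexp.const_sub 1)
    have h2 := hasDerivAt_iff_tendsto_slope.mp h1
    have h3 : Tendsto (fun t : ℂ => (1 - Complex.exp (w * t)) / t) (𝓝[≠] 0) (𝓝 (-w)) := by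
      refine h2.congr' ?_
      filter_upwards [self_mem_nhdsWithin] with t ht
      rw [slope_def_field]
      simp
    have h4 := h3.inv₀ (neg_ne_zero.2 hw)
    refine h4.congr fun t => ?_
    rw [inv_div]
  set q : ℂ → ℂ := fun t => t ^ 2 * Complex.exp (c * t) /
      ((1 - Complex.exp (P * t)) * (1 - Complex.exp (Q * t))) with hqdef
  have hq_eq : ∀ t : ℂ, q t = Complex.exp (c * t) * (t / (1 - Complex.exp (P * t))) *
      (t / (1 - Complex.exp (Q * t))) := by
    intro t; simp only [hqdef, div_eq_mul_inv, mul_inv]; ring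
  have hqlim0 : Tendsto q (𝓝[≠] 0) (𝓝 (1 / (P * Q))) := by
    have hexp : Tendsto (fun t : ℂ => Complex.exp (c * t)) (𝓝[≠] (0 : ℂ)) (𝓝 1) := by
      have hcont : Continuous fun t : ℂ => Complex.exp (c * t) := by fun_prop
      have h := (hcont.tendsto 0).mono_left (nhdsWithin_le_nhds (s := {(0 : ℂ)}ᶜ))
      simpa using h
    have h := (hexp.mul (hqlim P hP0)).mul (hqlim Q hQ0)
    have hval : (1 : ℂ) * (-P)⁻¹ * (-Q)⁻¹ = 1 / (P * Q) := by
      field_simp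
    rw [hval] at h
    exact h.congr fun t => (hq_eq t).symm
  set F : ℂ → ℂ := Function.update q 0 (1 / (P * Q)) with hFdef
  have hFq : ∀ t : ℂ, t ≠ 0 → F t = q t := fun t ht => Function.update_of_ne ht _ _
  have hF0 : F 0 = 1 / (P * Q) := Function.update_self _ _ _
  have hRdiff : Differentiable ℂ (fun t : ℂ => t ^ 2 * Complex.exp (c * t)) := by fun_prop
  have hDdiff : Differentiable ℂ
      (fun t : ℂ => (1 - Complex.exp (P * t)) * (1 - Complex.exp (Q * t))) := by fun_prop
  have hFan : AnalyticAt ℂ F 0 := by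
    apply Complex.analyticAt_of_differentiable_on_punctured_nhds_of_continuousAt
    · have hball : Metric.ball (0 : ℂ) (min (π / ‖P‖) (π / ‖Q‖)) ∈ 𝓝[≠] (0 : ℂ) :=
        nhdsWithin_le_nhds (Metric.ball_mem_nhds _ hδpos)
      filter_upwards [hball, self_mem_nhdsWithin] with z hz hz0
      have hz0' : z ≠ 0 := hz0
      have hzn : ‖z‖ < min (π / ‖P‖) (π / ‖Q‖) := by simpa [mem_ball_zero_iff] using hz
      have hDz : (1 - Complex.exp (P * z)) * (1 - Complex.exp (Q * z)) ≠ 0 :=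
        mul_ne_zero (key_ne P hP0 z hz0' (lt_of_lt_of_le hzn (min_le_left _ _)))
          (key_ne Q hQ0 z hz0' (lt_of_lt_of_le hzn (min_le_right _ _)))
      have hqz : DifferentiableAt ℂ q z := (hRdiff z).div (hDdiff z) hDz
      apply hqz.congr_of_eventuallyEq
      filter_upwards [compl_singleton_mem_nhds hz0'] with y hy
      exact hFq y hy
    · exact continuousAt_update_same.2 hqlim0
  refine ⟨F, hFan, ?_, hF0, ?_⟩
  · intro t ht _
    rw [hFq t (norm_pos_iff.1 ht)]
  -- now the derivative computation
  have hEPan : AnalyticAt ℂ (fun t : ℂ => 1 - Complex.exp (P * t)) 0 :=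
    analyticAt_const.sub (analyticAt_const.mul analyticAt_id).cexp
  have hEQan : AnalyticAt ℂ (fun t : ℂ => 1 - Complex.exp (Q * t)) 0 :=
    analyticAt_const.sub (analyticAt_const.mul analyticAt_id).cexp
  have hDan : AnalyticAt ℂ
      (fun t : ℂ => (1 - Complex.exp (P * t)) * (1 - Complex.exp (Q * t))) 0 := hEPan.mul hEQan
  have hpan : AnalyticAt ℂ (fun t : ℂ => t ^ 2) 0 := analyticAt_id.pow 2
  have hexpan : AnalyticAt ℂ (fun t : ℂ => Complex.exp (c * t)) 0 :=
    (analyticAt_const.mul analyticAt_id).cexp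
  have hFD : (fun t : ℂ => F t * ((1 - Complex.exp (P * t)) * (1 - Complex.exp (Q * t))))
      =ᶠ[𝓝 (0 : ℂ)] fun t : ℂ => t ^ 2 * Complex.exp (c * t) := by
    filter_upwards [Metric.ball_mem_nhds (0 : ℂ) hδpos] with t htb
    rcases eq_or_ne t 0 with rfl | ht
    · simp [hF0]
    · have htn : ‖t‖ < min (π / ‖P‖) (π / ‖Q‖) := by simpa [mem_ball_zero_iff] using htb
      have hDt : (1 - Complex.exp (P * t)) * (1 - Complex.exp (Q * t)) ≠ 0 :=
        mul_ne_zero (key_ne P hP0 t ht (lt_of_lt_of_le htn (min_le_left _ _)))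
          (key_ne Q hQ0 t ht (lt_of_lt_of_le htn (min_le_right _ _)))
      rw [hFq t ht]
      simp only [hqdef]
      exact div_mul_cancel₀ _ hDt
  -- values of iterated derivatives of the pieces
  have hEP1 : iteratedDeriv 1 (fun t : ℂ => 1 - Complex.exp (P * t)) 0 = -P ^ 1 :=
    itd_one_sub_exp P 1 one_ne_zero
  have hEP2 : iteratedDeriv 2 (fun t : ℂ => 1 - Complex.exp (P * t)) 0 = -P ^ 2 :=
    itd_one_sub_exp P 2 two_ne_zero
  have hEP3 : iteratedDeriv 3 (fun t : ℂ => 1 - Complex.exp (P * t)) 0 = -P ^ 3 :=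
    itd_one_sub_exp P 3 three_ne_zero
  have hEQ1 : iteratedDeriv 1 (fun t : ℂ => 1 - Complex.exp (Q * t)) 0 = -Q ^ 1 :=
    itd_one_sub_exp Q 1 one_ne_zero
  have hEQ2 : iteratedDeriv 2 (fun t : ℂ => 1 - Complex.exp (Q * t)) 0 = -Q ^ 2 :=
    itd_one_sub_exp Q 2 two_ne_zero
  have hEQ3 : iteratedDeriv 3 (fun t : ℂ => 1 - Complex.exp (Q * t)) 0 = -Q ^ 3 :=
    itd_one_sub_exp Q 3 three_ne_zero
  have hEP0 : iteratedDeriv 0 (fun t : ℂ => 1 - Complex.exp (P * t)) 0 = 0 := by simp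
  have hEQ0 : iteratedDeriv 0 (fun t : ℂ => 1 - Complex.exp (Q * t)) 0 = 0 := by simp
  have hDv : ∀ n : ℕ,
      iteratedDeriv n (fun t : ℂ => (1 - Complex.exp (P * t)) * (1 - Complex.exp (Q * t))) 0 =
      ∑ k ∈ Finset.range (n + 1), (n.choose k : ℂ) *
        iteratedDeriv k (fun t : ℂ => 1 - Complex.exp (P * t)) 0 *
        iteratedDeriv (n - k) (fun t : ℂ => 1 - Complex.exp (Q * t)) 0 :=
    fun n => itd_leibniz n _ _ 0 hEPan hEQan
  have hD0 : iteratedDeriv 0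
      (fun t : ℂ => (1 - Complex.exp (P * t)) * (1 - Complex.exp (Q * t))) 0 = 0 := by simp
  have hD1 : iteratedDeriv 1
      (fun t : ℂ => (1 - Complex.exp (P * t)) * (1 - Complex.exp (Q * t))) 0 = 0 := by
    rw [hDv 1]
    simp [Finset.sum_range_succ, hEP0, hEQ0]
  have hD2 : iteratedDeriv 2
      (fun t : ℂ => (1 - Complex.exp (P * t)) * (1 - Complex.exp (Q * t))) 0 = 2 * (P * Q) := by
    rw [hDv 2]
    simp [Finset.sum_range_succ, hEP0, hEQ0, hEP1, hEQ1, hEP2, hEQ2]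
    ring
  have hD3 : iteratedDeriv 3
      (fun t : ℂ => (1 - Complex.exp (P * t)) * (1 - Complex.exp (Q * t))) 0 =
      3 * P ^ 2 * Q + 3 * P * Q ^ 2 := by
    rw [hDv 3]
    simp [Finset.sum_range_succ, hEP0, hEQ0, hEP1, hEQ1, hEP2, hEQ2, hEP3, hEQ3,
      (show (3 : ℕ).choose 1 = 3 by decide), (show (3 : ℕ).choose 2 = 3 by decide)]
    ring
  have hD4 : iteratedDeriv 4
      (fun t : ℂ => (1 - Complex.exp (P * t)) * (1 - Complex.exp (Q * t))) 0 =
      4 * P ^ 3 * Q + 6 * P ^ 2 * Q ^ 2 + 4 * P * Q ^ 3 := by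
    rw [hDv 4]
    simp [Finset.sum_range_succ, hEP0, hEQ0, hEP1, hEQ1, hEP2, hEQ2, hEP3, hEQ3,
      (show (4 : ℕ).choose 1 = 4 by decide), (show (4 : ℕ).choose 2 = 6 by decide),
      (show (4 : ℕ).choose 3 = 4 by decide)]
    ring
  -- values of iterated derivatives of R
  have hp1fun : deriv (fun t : ℂ => t ^ 2) = fun t : ℂ => 2 * t := by
    funext t; rw [deriv_pow_field]; norm_num
  have hp2fun : iteratedDeriv 2 (fun t : ℂ => t ^ 2) = fun _ : ℂ => 2 := by
    rw [iteratedDeriv_succ, iteratedDeriv_one, hp1fun]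
    funext t
    rw [deriv_const_mul _ differentiableAt_fun_id, deriv_id'', mul_one]
  have hp3fun : iteratedDeriv 3 (fun t : ℂ => t ^ 2) = fun _ : ℂ => 0 := by
    rw [iteratedDeriv_succ, hp2fun, deriv_const']
  have hp0v : iteratedDeriv 0 (fun t : ℂ => t ^ 2) 0 = 0 := by simp
  have hp1v : iteratedDeriv 1 (fun t : ℂ => t ^ 2) 0 = 0 := by
    rw [iteratedDeriv_one, hp1fun]; simp
  have hp2v : iteratedDeriv 2 (fun t : ℂ => t ^ 2) 0 = 2 := by rw [hp2fun]
  have hp3v : iteratedDeriv 3 (fun t : ℂ => t ^ 2) 0 = 0 := by rw [hp3fun]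
  have hp4v : iteratedDeriv 4 (fun t : ℂ => t ^ 2) 0 = 0 := by
    rw [iteratedDeriv_succ, hp3fun, deriv_const']
  have hce : ∀ k : ℕ, iteratedDeriv k (fun t : ℂ => Complex.exp (c * t)) 0 = c ^ k := by
    intro k; rw [iteratedDeriv_cexp_const_mul]; simp
  have hRv : ∀ n : ℕ, iteratedDeriv n (fun t : ℂ => t ^ 2 * Complex.exp (c * t)) 0 =
      ∑ k ∈ Finset.range (n + 1), (n.choose k : ℂ) *
        iteratedDeriv k (fun t : ℂ => t ^ 2) 0 *
        iteratedDeriv (n - k) (fun t : ℂ => Complex.exp (c * t)) 0 :=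
    fun n => itd_leibniz n _ _ 0 hpan hexpan
  have hR3 : iteratedDeriv 3 (fun t : ℂ => t ^ 2 * Complex.exp (c * t)) 0 = 6 * c := by
    rw [hRv 3, Finset.sum_range_succ, Finset.sum_range_succ, Finset.sum_range_succ,
      Finset.sum_range_succ, Finset.sum_range_zero, hp0v, hp1v, hp2v, hp3v, hce, hce, hce, hce]
    norm_num [(show (3 : ℕ).choose 2 = 3 by decide)]
  have hR4 : iteratedDeriv 4 (fun t : ℂ => t ^ 2 * Complex.exp (c * t)) 0 = 12 * c ^ 2 := by
    rw [hRv 4, Finset.sum_range_succ, Finset.sum_range_succ, Finset.sum_range_succ,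
      Finset.sum_range_succ, Finset.sum_range_succ, Finset.sum_range_zero,
      hp0v, hp1v, hp2v, hp3v, hp4v, hce, hce, hce, hce, hce]
    norm_num [(show (4 : ℕ).choose 2 = 6 by decide)]
  -- key equations
  have keyn : ∀ n : ℕ,
      (∑ k ∈ Finset.range (n + 1), (n.choose k : ℂ) * iteratedDeriv k F 0 *
        iteratedDeriv (n - k)
          (fun t : ℂ => (1 - Complex.exp (P * t)) * (1 - Complex.exp (Q * t))) 0) =
      iteratedDeriv n (fun t : ℂ => t ^ 2 * Complex.exp (c * t)) 0 := by
    intro n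
    rw [← itd_leibniz n F _ 0 hFan hDan]
    exact hFD.iteratedDeriv_eq n
  have e3 := keyn 3
  have e4 := keyn 4
  rw [hR3] at e3
  rw [hR4] at e4
  simp only [Finset.sum_range_succ, Finset.sum_range_zero, zero_add, hD0, hD1, hD2, hD3, hD4,
    Nat.choose_zero_right, Nat.choose_one_right, Nat.choose_self,
    (show (3 : ℕ).choose 2 = 3 by decide), (show (4 : ℕ).choose 2 = 6 by decide),
    (show (4 : ℕ).choose 3 = 4 by decide)] at e3 e4
  push_cast at e3 e4
  have hPQF0 : P * Q * iteratedDeriv 0 F 0 = 1 := by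
    rw [iteratedDeriv_zero, hF0]
    field_simp
  have hF1' : 2 * P * Q * iteratedDeriv 1 F 0 = 2 * c - (P + Q) := by
    linear_combination (1 / 3 : ℂ) * e3 - (P + Q) * hPQF0
  have hF2' : 6 * P * Q * iteratedDeriv 2 F 0 =
      6 * c ^ 2 - 6 * c * (P + Q) + P ^ 2 + Q ^ 2 + 3 * P * Q := by
    linear_combination (1 / 2 : ℂ) * e4 - 3 * (P + Q) * hF1' -
      (2 * P ^ 2 + 3 * P * Q + 2 * Q ^ 2) * hPQF0
  have h6PQ : (6 : ℂ) * P * Q ≠ 0 := by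
    simp [hP0, hQ0]
  have hF2val : iteratedDeriv 2 F 0 =
      (6 * c ^ 2 - 6 * c * (P + Q) + P ^ 2 + Q ^ 2 + 3 * P * Q) / (6 * P * Q) := by
    rw [eq_div_iff h6PQ]
    linear_combination hF2'
  have h12 : (12 : ℂ) * P * Q ≠ 0 := by simp [hP0, hQ0]
  apply mul_left_cancel₀ h12
  have lhs : 12 * P * Q * ((1 / 2) * iteratedDeriv 2 F 0) =
      6 * c ^ 2 - 6 * c * (P + Q) + P ^ 2 + Q ^ 2 + 3 * P * Q := by
    rw [hF2val]
    field_simp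
    ring
  have rhs : 12 * P * Q * ((P / Q) * ((x₁ : ℂ) ^ 2 - (x₁ : ℂ) + 1 / 6) / 2 +
        ((x₁ : ℂ) - 1 / 2) * ((x₂ : ℂ) - 1 / 2) +
        (Q / P) * ((x₂ : ℂ) ^ 2 - (x₂ : ℂ) + 1 / 6) / 2) =
      6 * c ^ 2 - 6 * c * (P + Q) + P ^ 2 + Q ^ 2 + 3 * P * Q := by
    have hPinv : P * P⁻¹ = 1 := mul_inv_cancel₀ hP0
    have hQinv : Q * Q⁻¹ = 1 := mul_inv_cancel₀ hQ0
    rw [hc]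
    linear_combination (6 * P ^ 2 * ((x₁ : ℂ) ^ 2 - (x₁ : ℂ) + 1 / 6)) * hQinv +
      (6 * Q ^ 2 * ((x₂ : ℂ) ^ 2 - (x₂ : ℂ) + 1 / 6)) * hPinv
  rw [lhs, rhs]
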